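/- For any nonnegative integer N and ν ∈ {0,1}, Σ_{k=−N}^{N+ν} q^{2k²−k} / ((q²;q²)_{N+k} (q²;q²)_{N+ν−k}) = 1/(q;q)_{2N+ν}. -/

import Mathlib

open Finset PowerSeries

set_option maxHeartbeats 1000000

/-- A partition represented as a non-increasing list of positive integers. -/
def IsPartitionList (L : List ℕ) : Prop :=
  L.Pairwise (· ≥ ·) ∧ ∀ x ∈ L, 0 < x

/-- A partition into distinct parts (strict partition). -/
def IsStrictPartitionList (L : List ℕ) : Prop :=
  L.Pairwise (· > ·) ∧ ∀ x ∈ L, 0 < x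

/-- BG-rank: (# odd parts in odd (1-based) positions) − (# odd parts in even positions). -/
def bgRank (L : List ℕ) : ℤ :=
  (((L.zipIdx.map Prod.swap).filter (fun p => p.2 % 2 == 1 && p.1 % 2 == 0)).length : ℤ) -
  (((L.zipIdx.map Prod.swap).filter (fun p => p.2 % 2 == 1 && p.1 % 2 == 1)).length : ℤ)

/-- Length of the `j`-th (1-based) column of the shifted Young diagram of `L`:
row `i` (1-based) occupies columns `i, …, i + λ_i - 1`. -/
def shiftedCol (L : List ℕ) (j : ℕ) : ℕ :=
  ((Finset.range L.length).filter (fun i => i + 1 ≤ j ∧ j ≤ i + L.getD i 0)).card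

/-- Alternating sum `∑_{i=1}^{m} (-1)^i c_i` of shifted column lengths. -/
def altColSum (L : List ℕ) (m : ℕ) : ℤ :=
  ∑ i ∈ Finset.range m, (-1 : ℤ) ^ (i + 1) * (shiftedCol L (i + 1) : ℤ)

/-- An (a,b)-sequence: `d_i = a + i` for `1 ≤ i ≤ b`, non-increasing from index `b`,
positive entries, and alternating sum zero. (0-based indexing via `getD`.) -/
def IsABSeq (a b : ℕ) (d : List ℕ) : Prop :=
  1 ≤ b ∧ b ≤ d.length ∧ (∀ x ∈ d, 0 < x) ∧
  (∀ i < b, d.getD i 0 = a + i + 1) ∧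
  (∀ i j, b - 1 ≤ i → i ≤ j → j < d.length → d.getD j 0 ≤ d.getD i 0) ∧
  (∑ i ∈ Finset.range d.length, (-1 : ℤ) ^ (i + 1) * (d.getD i 0 : ℤ)) = 0

/-- The quantities `b_i`: `b_1 = d_1`, `b_i = d_i - b_{i-1}` (0-based: `bAux d (i-1) = b_i`). -/
def bAux (d : List ℕ) : ℕ → ℤ
  | 0 => (d.getD 0 0 : ℤ)
  | n + 1 => (d.getD (n + 1) 0 : ℤ) - bAux d n

/-- The q-Pochhammer symbol `(q²; q²)_n` as a power series in `q`. -/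
noncomputable def qq2Poch (n : ℕ) : PowerSeries ℚ :=
  ∏ i ∈ Finset.range n, (1 - (PowerSeries.X : PowerSeries ℚ) ^ (2 * (i + 1)))

/-- The Gaussian binomial coefficient `[m choose n]_{q²}` as a power series in `q`,
zero unless `0 ≤ n ≤ m`. -/
noncomputable def gaussBinom2 (m : ℕ) (n : ℤ) : PowerSeries ℚ :=
  if 0 ≤ n ∧ n ≤ (m : ℤ) then
    qq2Poch m * (qq2Poch n.toNat * qq2Poch (m - n.toNat))⁻¹
  else 0

noncomputable def gAux (a b : ℕ) : PowerSeries ℚ := (qq2Poch a * qq2Poch b)⁻¹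

noncomputable def gZ (a b : ℤ) : PowerSeries ℚ :=
  if 0 ≤ a ∧ 0 ≤ b then gAux a.toNat b.toNat else 0

lemma cc_qq2Poch (n : ℕ) : constantCoeff (qq2Poch n) = 1 := by
  simp [qq2Poch, map_prod]

lemma qq2Poch_ne (n : ℕ) : qq2Poch n ≠ 0 := by
  intro h; have := cc_qq2Poch n; rw [h] at this; simp at this

lemma gAux_mul_cancel (a b : ℕ) : gAux a b * (qq2Poch a * qq2Poch b) = 1 := by
  apply PowerSeries.inv_mul_cancel
  simp [map_mul, cc_qq2Poch]

lemma gAux_comm (a b : ℕ) : gAux a b = gAux b a := by rw [gAux, gAux, mul_comm]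

lemma gZ_comm (a b : ℤ) : gZ a b = gZ b a := by
  by_cases ha : 0 ≤ a <;> by_cases hb : 0 ≤ b <;> simp [gZ, ha, hb, gAux_comm]

lemma gZ_zero {a b : ℤ} (h : a < 0 ∨ b < 0) : gZ a b = 0 := by
  rw [gZ, if_neg]; omega

lemma gZ_nat (a b : ℕ) : gZ (a : ℤ) (b : ℤ) = gAux a b := by
  simp [gZ]

lemma qq2Poch_succ (n : ℕ) :
    qq2Poch (n + 1) = qq2Poch n * (1 - (X : PowerSeries ℚ) ^ (2 * (n + 1))) := by
  rw [qq2Poch, Finset.prod_range_succ]; rfl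

lemma gAux_C1 (a n : ℕ) : gAux a (n + 1) * (1 - (X : PowerSeries ℚ) ^ (2 * (n + 1))) = gAux a n := by
  apply mul_right_cancel₀ (mul_ne_zero (qq2Poch_ne a) (qq2Poch_ne n))
  rw [gAux_mul_cancel]
  calc gAux a (n+1) * (1 - (X : PowerSeries ℚ) ^ (2 * (n + 1))) * (qq2Poch a * qq2Poch n)
      = gAux a (n+1) * (qq2Poch a * (qq2Poch n * (1 - (X : PowerSeries ℚ) ^ (2 * (n + 1))))) := by
        ring
    _ = gAux a (n+1) * (qq2Poch a * qq2Poch (n+1)) := by rw [← qq2Poch_succ]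
    _ = 1 := gAux_mul_cancel a (n+1)

lemma gAux_C2 (n b : ℕ) : gAux (n + 1) b * (1 - (X : PowerSeries ℚ) ^ (2 * (n + 1))) = gAux n b := by
  rw [gAux_comm, gAux_comm n]; exact gAux_C1 b n

lemma quad_nonneg (k : ℤ) : 0 ≤ 2 * k ^ 2 - k := by
  nlinarith [sq_nonneg k, sq_nonneg (k - 1), sq_nonneg (k + 1)]


/-- The main Pascal-type recurrence for `gZ`, valid for ALL integers. -/
lemma gZ_pascal (a b : ℤ) :
    (1 - (X : PowerSeries ℚ) ^ (2 * (a + b)).toNat) * gZ a b =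
      gZ a (b - 1) + (X : PowerSeries ℚ) ^ (2 * b).toNat * gZ (a - 1) b := by
  by_cases ha : 0 ≤ a
  case neg =>
    rw [gZ_zero (Or.inl (by omega)), gZ_zero (Or.inl (by omega)), gZ_zero (Or.inl (by omega))]
    ring
  by_cases hb : 0 ≤ b
  case neg =>
    rw [gZ_zero (Or.inr (by omega)), gZ_zero (Or.inr (by omega)), gZ_zero (Or.inr (by omega))]
    ring
  lift a to ℕ using ha
  lift b to ℕ using hb
  rcases a with _ | a
  · rcases b with _ | b
    · norm_num [gZ_zero]
    · -- a = 0, b+1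
      have h1 : ((2:ℤ) * (((0:ℕ):ℤ) + ((b+1 : ℕ):ℤ))).toNat = 2 * (b + 1) := by omega
      have h2 : ((b+1 : ℕ):ℤ) - 1 = ((b:ℕ):ℤ) := by omega
      have h3 : ((2:ℤ) * ((b+1 : ℕ):ℤ)).toNat = 2 * (b+1) := by omega
      rw [h1, h2, h3, gZ_zero (Or.inl (by omega) : ((0:ℕ):ℤ) - 1 < 0 ∨ _), mul_zero, add_zero,
        gZ_nat, gZ_nat, mul_comm]
      exact gAux_C1 0 b
  · rcases b with _ | b
    · -- a+1, b = 0
      have h1 : ((2:ℤ) * (((a+1:ℕ):ℤ) + ((0:ℕ):ℤ))).toNat = 2 * (a + 1) := by omega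
      have h2 : ((a+1 : ℕ):ℤ) - 1 = ((a:ℕ):ℤ) := by omega
      have h3 : ((2:ℤ) * ((0:ℕ):ℤ)).toNat = 0 := by omega
      rw [h1, h2, h3, gZ_zero (Or.inr (by omega) : _ ∨ ((0:ℕ):ℤ) - 1 < 0), zero_add,
        pow_zero, one_mul, gZ_nat, gZ_nat, mul_comm]
      exact gAux_C2 a 0
    · -- a+1, b+1
      have h1 : ((2:ℤ) * (((a+1:ℕ):ℤ) + ((b+1:ℕ):ℤ))).toNat = 2 * (a + b + 2) := by omega
      have h2 : ((a+1 : ℕ):ℤ) - 1 = ((a:ℕ):ℤ) := by omega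
      have h2' : ((b+1 : ℕ):ℤ) - 1 = ((b:ℕ):ℤ) := by omega
      have h3 : ((2:ℤ) * ((b+1:ℕ):ℤ)).toNat = 2 * (b+1) := by omega
      rw [h1, h2, h2', h3, gZ_nat, gZ_nat, gZ_nat]
      apply mul_right_cancel₀ (mul_ne_zero (qq2Poch_ne (a+1)) (qq2Poch_ne (b+1)))
      have e1 : (1 - (X : PowerSeries ℚ) ^ (2 * (a + b + 2))) * gAux (a+1) (b+1) *
          (qq2Poch (a+1) * qq2Poch (b+1)) = 1 - (X : PowerSeries ℚ) ^ (2 * (a + b + 2)) := by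
        calc (1 - (X : PowerSeries ℚ) ^ (2 * (a + b + 2))) * gAux (a+1) (b+1) *
            (qq2Poch (a+1) * qq2Poch (b+1))
            = (1 - (X : PowerSeries ℚ) ^ (2 * (a + b + 2))) *
              (gAux (a+1) (b+1) * (qq2Poch (a+1) * qq2Poch (b+1))) := by ring
          _ = _ := by rw [gAux_mul_cancel, mul_one]
      have e2 : gAux (a+1) b * (qq2Poch (a+1) * qq2Poch (b+1)) =
          1 - (X : PowerSeries ℚ) ^ (2 * (b+1)) := by
        calc gAux (a+1) b * (qq2Poch (a+1) * qq2Poch (b+1))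
            = gAux (a+1) b * (qq2Poch (a+1) * qq2Poch b) *
              (1 - (X : PowerSeries ℚ) ^ (2 * (b+1))) := by rw [qq2Poch_succ b]; ring
          _ = _ := by rw [gAux_mul_cancel, one_mul]
      have e3 : gAux a (b+1) * (qq2Poch (a+1) * qq2Poch (b+1)) =
          1 - (X : PowerSeries ℚ) ^ (2 * (a+1)) := by
        calc gAux a (b+1) * (qq2Poch (a+1) * qq2Poch (b+1))
            = gAux a (b+1) * (qq2Poch a * qq2Poch (b+1)) *
              (1 - (X : PowerSeries ℚ) ^ (2 * (a+1))) := by rw [qq2Poch_succ a]; ring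
          _ = _ := by rw [gAux_mul_cancel, one_mul]
      rw [e1, add_mul, e2]
      calc (1 : PowerSeries ℚ) - X ^ (2 * (a + b + 2))
          = 1 - X ^ (2*(b+1)) + X ^ (2*(b+1)) * (1 - X ^ (2*(a+1))) := by
            have : (X : PowerSeries ℚ) ^ (2*(b+1)) * X ^ (2*(a+1)) = X ^ (2 * (a + b + 2)) := by
              rw [← pow_add]; congr 1; omega
            rw [mul_sub, mul_one, this]; ring
        _ = 1 - X ^ (2*(b+1)) + X ^ (2*(b+1)) * (gAux a (b+1) * (qq2Poch (a+1) * qq2Poch (b+1))) := by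
            rw [e3]
        _ = 1 - X ^ (2*(b+1)) + X ^ (2*(b+1)) * gAux a (b+1) * (qq2Poch (a+1) * qq2Poch (b+1)) := by
            ring

lemma gZ_pascal' (a b : ℤ) :
    (1 - (X : PowerSeries ℚ) ^ (2 * (a + b)).toNat) * gZ a b =
      gZ (a - 1) b + (X : PowerSeries ℚ) ^ (2 * a).toNat * gZ a (b - 1) := by
  have := gZ_pascal b a
  rw [gZ_comm b a, gZ_comm b (a-1), gZ_comm (b-1) a, add_comm b a] at this
  exact this

noncomputable def S0 (N : ℕ) : PowerSeries ℚ :=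
  ∑ k ∈ Finset.Icc (-(N : ℤ)) (N : ℤ),
    (X : PowerSeries ℚ) ^ (2 * k ^ 2 - k).toNat * gZ ((N : ℤ) + k) ((N : ℤ) - k)

noncomputable def S1 (N : ℕ) : PowerSeries ℚ :=
  ∑ k ∈ Finset.Icc (-(N : ℤ)) ((N : ℤ) + 1),
    (X : PowerSeries ℚ) ^ (2 * k ^ 2 - k).toNat * gZ ((N : ℤ) + k) ((N : ℤ) + 1 - k)

lemma S0_ext (N : ℕ) : S0 N = ∑ k ∈ Finset.Icc (-(N : ℤ) - 1) ((N : ℤ) + 1),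
    (X : PowerSeries ℚ) ^ (2 * k ^ 2 - k).toNat * gZ ((N : ℤ) + k) ((N : ℤ) - k) := by
  apply Finset.sum_subset (Finset.Icc_subset_Icc (by omega) (by omega))
  intro x hx hnx
  rw [Finset.mem_Icc] at hx
  rw [Finset.mem_Icc] at hnx
  rw [gZ_zero (by omega), mul_zero]

lemma S1_ext (N : ℕ) : S1 N = ∑ k ∈ Finset.Icc (-(N : ℤ) - 1) ((N : ℤ) + 1),
    (X : PowerSeries ℚ) ^ (2 * k ^ 2 - k).toNat * gZ ((N : ℤ) + k) ((N : ℤ) + 1 - k) := by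
  apply Finset.sum_subset (Finset.Icc_subset_Icc (by omega) (by omega))
  intro x hx hnx
  rw [Finset.mem_Icc] at hx
  rw [Finset.mem_Icc] at hnx
  rw [gZ_zero (by omega), mul_zero]

lemma keyA (N : ℕ) :
    (1 - (X : PowerSeries ℚ) ^ (4 * N + 2)) * S1 N
      = S0 N + (X : PowerSeries ℚ) ^ (2 * N + 1) * S0 N := by
  rw [S1_ext, Finset.mul_sum]
  have hpt : ∀ k ∈ Finset.Icc (-(N : ℤ) - 1) ((N : ℤ) + 1),
      (1 - (X : PowerSeries ℚ) ^ (4 * N + 2)) *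
        ((X : PowerSeries ℚ) ^ (2 * k ^ 2 - k).toNat * gZ ((N : ℤ) + k) ((N : ℤ) + 1 - k)) =
      (X : PowerSeries ℚ) ^ (2 * k ^ 2 - k).toNat * gZ ((N : ℤ) + k) ((N : ℤ) - k) +
      (X : PowerSeries ℚ) ^ (2 * k ^ 2 - k).toNat *
        ((X : PowerSeries ℚ) ^ (2 * ((N : ℤ) + 1 - k)).toNat * gZ ((N : ℤ) + k - 1) ((N : ℤ) + 1 - k)) := by
    intro k hk
    have h := gZ_pascal ((N : ℤ) + k) ((N : ℤ) + 1 - k)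
    have h1 : ((2:ℤ) * (((N : ℤ) + k) + ((N : ℤ) + 1 - k))).toNat = 4 * N + 2 := by omega
    have h2 : ((N : ℤ) + 1 - k) - 1 = (N : ℤ) - k := by ring
    rw [h1, h2] at h
    rw [mul_left_comm, h, mul_add]
  rw [Finset.sum_congr rfl hpt, Finset.sum_add_distrib, ← S0_ext]
  congr 1
  rw [S0, Finset.mul_sum]
  rw [← Finset.sum_subset
      (Finset.Icc_subset_Icc (by omega : -(N : ℤ) - 1 ≤ 1 - (N : ℤ)) (le_refl ((N:ℤ)+1)))
      (by
        intro x hx hnx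
        rw [Finset.mem_Icc] at hx
        rw [Finset.mem_Icc] at hnx
        rw [gZ_zero (by omega), mul_zero, mul_zero])]
  refine (Finset.sum_nbij' (fun j => 1 - j) (fun k => 1 - k) ?_ ?_ ?_ ?_ ?_).symm
  · intro j hj; simp only [Finset.mem_Icc] at *; omega
  · intro k hk; simp only [Finset.mem_Icc] at *; omega
  · intro j hj; omega
  · intro k hk; omega
  · intro j hj
    rw [Finset.mem_Icc] at hj
    rw [show (N : ℤ) + (1 - j) - 1 = (N : ℤ) - j by ring,
      show (N : ℤ) + 1 - (1 - j) = (N : ℤ) + j by ring, gZ_comm ((N:ℤ) - j)]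
    rw [← mul_assoc, ← mul_assoc, ← pow_add, ← pow_add]
    congr 2
    have hq1 := quad_nonneg j
    have hq2 := quad_nonneg (1 - j)
    have e1 : 2 * (1 - j) ^ 2 - (1 - j) = (2 * j ^ 2 - j) + (1 - 2 * j) := by ring
    rw [e1] at hq2
    rw [e1]
    generalize 2 * j ^ 2 - j = m at hq1 hq2 ⊢
    omega

lemma S0_succ (N : ℕ) : S0 (N + 1) = ∑ k ∈ Finset.Icc (-(N : ℤ) - 1) ((N : ℤ) + 1),
    (X : PowerSeries ℚ) ^ (2 * k ^ 2 - k).toNat * gZ ((N : ℤ) + 1 + k) ((N : ℤ) + 1 - k) := by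
  rw [S0]
  apply Finset.sum_congr
  · congr 1 <;> push_cast <;> ring
  · intro k hk
    congr 2 <;> push_cast <;> ring

lemma keyB (N : ℕ) :
    (1 - (X : PowerSeries ℚ) ^ (4 * N + 4)) * S0 (N + 1)
      = S1 N + (X : PowerSeries ℚ) ^ (2 * N + 2) * S1 N := by
  rw [S0_succ, Finset.mul_sum]
  have hpt : ∀ k ∈ Finset.Icc (-(N : ℤ) - 1) ((N : ℤ) + 1),
      (1 - (X : PowerSeries ℚ) ^ (4 * N + 4)) *
        ((X : PowerSeries ℚ) ^ (2 * k ^ 2 - k).toNat * gZ ((N : ℤ) + 1 + k) ((N : ℤ) + 1 - k)) =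
      (X : PowerSeries ℚ) ^ (2 * k ^ 2 - k).toNat * gZ ((N : ℤ) + k) ((N : ℤ) + 1 - k) +
      (X : PowerSeries ℚ) ^ (2 * k ^ 2 - k).toNat *
        ((X : PowerSeries ℚ) ^ (2 * ((N : ℤ) + 1 + k)).toNat * gZ ((N : ℤ) + 1 + k) ((N : ℤ) - k)) := by
    intro k hk
    have h := gZ_pascal' ((N : ℤ) + 1 + k) ((N : ℤ) + 1 - k)
    have h1 : ((2:ℤ) * (((N : ℤ) + 1 + k) + ((N : ℤ) + 1 - k))).toNat = 4 * N + 4 := by omega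
    have h2 : ((N : ℤ) + 1 + k) - 1 = (N : ℤ) + k := by ring
    have h2' : ((N : ℤ) + 1 - k) - 1 = (N : ℤ) - k := by ring
    rw [h1, h2, h2'] at h
    rw [mul_left_comm, h, mul_add]
  rw [Finset.sum_congr rfl hpt, Finset.sum_add_distrib, ← S1_ext]
  congr 1
  rw [S1, Finset.mul_sum]
  rw [← Finset.sum_subset
      (Finset.Icc_subset_Icc (le_refl (-(N:ℤ) - 1)) (by omega : (N : ℤ) ≤ (N : ℤ) + 1))
      (by
        intro x hx hnx
        rw [Finset.mem_Icc] at hx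
        rw [Finset.mem_Icc] at hnx
        rw [gZ_zero (by omega), mul_zero, mul_zero])]
  refine (Finset.sum_nbij' (fun j => -j) (fun k => -k) ?_ ?_ ?_ ?_ ?_).symm
  · intro j hj; simp only [Finset.mem_Icc] at *; omega
  · intro k hk; simp only [Finset.mem_Icc] at *; omega
  · intro j hj; omega
  · intro k hk; omega
  · intro j hj
    rw [Finset.mem_Icc] at hj
    rw [show (N : ℤ) + 1 + -j = (N : ℤ) + 1 - j by ring,
      show (N : ℤ) - -j = (N : ℤ) + j by ring, gZ_comm ((N:ℤ) + 1 - j)]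
    rw [← mul_assoc, ← mul_assoc, ← pow_add, ← pow_add]
    congr 2
    have hq1 := quad_nonneg j
    have hq2 := quad_nonneg (-j)
    have e2 : 2 * (-j) ^ 2 - (-j) = (2 * j ^ 2 - j) + 2 * j := by ring
    rw [e2] at hq2
    rw [e2]
    generalize 2 * j ^ 2 - j = m at hq1 hq2 ⊢
    omega

lemma one_add_X_pow_ne (n : ℕ) (hn : n ≠ 0) : (1 + (X : PowerSeries ℚ) ^ n) ≠ 0 := by
  intro h
  have h1 : constantCoeff (1 + (X : PowerSeries ℚ) ^ n) = 1 := by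
    simp [map_add, map_pow, constantCoeff_X, zero_pow hn]
  rw [h] at h1
  simp at h1

lemma lemA (N : ℕ) : (1 - (X : PowerSeries ℚ) ^ (2 * N + 1)) * S1 N = S0 N := by
  apply mul_left_cancel₀ (one_add_X_pow_ne (2 * N + 1) (by omega))
  have hx : (X : PowerSeries ℚ) ^ (2 * N + 1) * X ^ (2 * N + 1) = X ^ (4 * N + 2) := by
    rw [← pow_add]; congr 1; omega
  calc (1 + (X : PowerSeries ℚ) ^ (2*N+1)) * ((1 - X ^ (2*N+1)) * S1 N)
      = (1 - (X : PowerSeries ℚ) ^ (2*N+1) * X ^ (2*N+1)) * S1 N := by ring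
    _ = (1 - (X : PowerSeries ℚ) ^ (4*N+2)) * S1 N := by rw [hx]
    _ = S0 N + (X : PowerSeries ℚ) ^ (2*N+1) * S0 N := keyA N
    _ = (1 + (X : PowerSeries ℚ) ^ (2*N+1)) * S0 N := by ring

lemma lemB (N : ℕ) : (1 - (X : PowerSeries ℚ) ^ (2 * N + 2)) * S0 (N + 1) = S1 N := by
  apply mul_left_cancel₀ (one_add_X_pow_ne (2 * N + 2) (by omega))
  have hx : (X : PowerSeries ℚ) ^ (2 * N + 2) * X ^ (2 * N + 2) = X ^ (4 * N + 4) := by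
    rw [← pow_add]; congr 1; omega
  calc (1 + (X : PowerSeries ℚ) ^ (2*N+2)) * ((1 - X ^ (2*N+2)) * S0 (N+1))
      = (1 - (X : PowerSeries ℚ) ^ (2*N+2) * X ^ (2*N+2)) * S0 (N+1) := by ring
    _ = (1 - (X : PowerSeries ℚ) ^ (4*N+4)) * S0 (N+1) := by rw [hx]
    _ = S1 N + (X : PowerSeries ℚ) ^ (2*N+2) * S1 N := keyB N
    _ = (1 + (X : PowerSeries ℚ) ^ (2*N+2)) * S1 N := by ring

lemma S0_zero : S0 0 = 1 := by
  rw [S0]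
  simp only [Nat.cast_zero, neg_zero, Finset.Icc_self, Finset.sum_singleton]
  norm_num
  have h : gZ 0 0 = gAux 0 0 := by rw [show (0:ℤ) = ((0:ℕ):ℤ) by norm_num, gZ_nat]
  rw [h]
  have h2 := gAux_mul_cancel 0 0
  have h3 : qq2Poch 0 = 1 := by rw [qq2Poch, Finset.range_zero, Finset.prod_empty]
  rw [h3, mul_one, mul_one] at h2
  exact h2

lemma prodS (N : ℕ) :
    (∏ j ∈ Finset.range (2 * N), (1 - (X : PowerSeries ℚ) ^ (j + 1))) * S0 N = 1 ∧
    (∏ j ∈ Finset.range (2 * N + 1), (1 - (X : PowerSeries ℚ) ^ (j + 1))) * S1 N = 1 := by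
  induction N with
  | zero =>
    constructor
    · rw [S0_zero]; norm_num
    · rw [show 2 * 0 + 1 = 0 + 1 by norm_num, Finset.prod_range_succ, Finset.range_zero,
        Finset.prod_empty, one_mul]
      rw [show (0:ℕ) + 1 = 2 * 0 + 1 by norm_num, lemA 0, S0_zero]
  | succ N ih =>
    have hstep1 : (∏ j ∈ Finset.range (2 * N + 1), (1 - (X : PowerSeries ℚ) ^ (j + 1))) * S1 N = 1 := by
      rw [Finset.prod_range_succ, mul_assoc]
      rw [show (2 * N : ℕ) + 1 = 2 * N + 1 from rfl, lemA N]
      exact ih.1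
    constructor
    · rw [show 2 * (N + 1) = (2 * N + 1) + 1 by omega, Finset.prod_range_succ, mul_assoc]
      rw [show (2 * N + 1 : ℕ) + 1 = 2 * N + 2 by omega, lemB N]
      exact hstep1
    · rw [show 2 * (N + 1) + 1 = ((2 * N + 1) + 1) + 1 by omega, Finset.prod_range_succ, mul_assoc]
      have e : ((2 * N + 1 : ℕ) + 1) + 1 = 2 * (N + 1) + 1 := by omega
      rw [e, lemA (N + 1)]
      rw [show (2 * N + 1 : ℕ) + 1 = 2 * N + 2 by omega, Finset.prod_range_succ, mul_assoc,
        show (2 * N + 1 : ℕ) + 1 = 2 * N + 2 by omega, lemB N]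
      exact ih.2

lemma cc_prod (M : ℕ) :
    constantCoeff (∏ j ∈ Finset.range M, (1 - (X : PowerSeries ℚ) ^ (j + 1))) = 1 := by
  rw [map_prod]
  apply Finset.prod_eq_one
  intro j hj
  simp [map_sub, map_pow, constantCoeff_X, zero_pow (Nat.succ_ne_zero j)]

/-- `∑_{k=−N}^{N+ν} q^{2k²−k}/((q²;q²)_{N+k}(q²;q²)_{N+ν−k}) = 1/(q;q)_{2N+ν}`. -/
theorem sum_over_bgRank_unrestricted (N : ℕ) (ν : ℕ) (hν : ν = 0 ∨ ν = 1) :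
    ∑ k ∈ Finset.Icc (-(N : ℤ)) ((N : ℤ) + ν),
        (PowerSeries.X : PowerSeries ℚ) ^ (2 * k ^ 2 - k).toNat *
          (qq2Poch ((N : ℤ) + k).toNat * qq2Poch ((N : ℤ) + ν - k).toNat)⁻¹ =
      (∏ j ∈ Finset.range (2 * N + ν), (1 - (PowerSeries.X : PowerSeries ℚ) ^ (j + 1)))⁻¹ := by
  rcases hν with h | h <;> subst h
  · simp only [Nat.cast_zero, add_zero]
    have hL : ∑ k ∈ Finset.Icc (-(N : ℤ)) ((N : ℤ)),
        (PowerSeries.X : PowerSeries ℚ) ^ (2 * k ^ 2 - k).toNat *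
          (qq2Poch ((N : ℤ) + k).toNat * qq2Poch ((N : ℤ) - k).toNat)⁻¹ = S0 N := by
      rw [S0]
      apply Finset.sum_congr rfl
      intro k hk
      rw [Finset.mem_Icc] at hk
      congr 1
      simp only [gZ, gAux]
      rw [if_pos ⟨by omega, by omega⟩]
    rw [hL, PowerSeries.eq_inv_iff_mul_eq_one (by rw [cc_prod]; norm_num), mul_comm]
    exact (prodS N).1
  · simp only [Nat.cast_one]
    have hL : ∑ k ∈ Finset.Icc (-(N : ℤ)) ((N : ℤ) + 1),
        (PowerSeries.X : PowerSeries ℚ) ^ (2 * k ^ 2 - k).toNat *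
          (qq2Poch ((N : ℤ) + k).toNat * qq2Poch ((N : ℤ) + 1 - k).toNat)⁻¹ = S1 N := by
      rw [S1]
      apply Finset.sum_congr rfl
      intro k hk
      rw [Finset.mem_Icc] at hk
      congr 1
      simp only [gZ, gAux]
      rw [if_pos ⟨by omega, by omega⟩]
    rw [hL, PowerSeries.eq_inv_iff_mul_eq_one (by rw [cc_prod]; norm_num), mul_comm]
    exact (prodS N).2
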